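/- Let p be a prime and let R be a commutative ring that is p-adically complete and separated (i.e. the natural map R → lim_n R/p^nR is an isomorphism). Then every finite projective R-module lifts to the p-typical Witt vectors: for every finitely generated projective R-module M there exists a finitely generated projective W(R)-module N together with an isomorphism of R-modules N ⊗_{W(R),w₀} R ≅ M, where w₀ : W(R) → R is the zeroth coefficient projection. -/

import Mathlib

open TensorProduct

universe u

namespace WittLift

open WittVector Function TensorProduct

variable {p : ℕ} [hp : Fact p.Prime] {A : Type*} [CommRing A]


/-- Evaluating an integer polynomial with zero constant term at nilpotent values
(on its variables) gives a nilpotent element. -/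
lemma isNilpotent_aeval {σ : Type*} {B : Type*} [CommRing B] (φ : MvPolynomial σ ℤ)
    (h0 : MvPolynomial.constantCoeff φ = 0) (v : σ → B)
    (hv : ∀ s ∈ φ.vars, IsNilpotent (v s)) : IsNilpotent (MvPolynomial.aeval v φ) := by
  rw [← mem_nilradical, ← Ideal.Quotient.eq_zero_iff_mem]
  have : Ideal.Quotient.mk (nilradical B) (MvPolynomial.aeval v φ)
      = MvPolynomial.aeval (fun s => Ideal.Quotient.mk (nilradical B) (v s)) φ := by
    rw [MvPolynomial.aeval_def, MvPolynomial.aeval_def, MvPolynomial.eval₂_comp_left]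
    rfl
  rw [this, MvPolynomial.aeval_eq_constantCoeff_of_vars, h0, map_zero]
  intro i hi
  rw [Ideal.Quotient.eq_zero_iff_mem, mem_nilradical]
  exact hv i hi

lemma isNilpotent_coeff_add (x y : WittVector p A) (n : ℕ)
    (hx : ∀ i ≤ n, IsNilpotent (x.coeff i)) (hy : ∀ i ≤ n, IsNilpotent (y.coeff i)) :
    IsNilpotent ((x + y).coeff n) := by
  rw [WittVector.add_coeff]
  apply isNilpotent_aeval _ (constantCoeff_wittAdd p n)
  intro s hs
  have := WittVector.wittAdd_vars (p := p) n hs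
  simp only [Finset.mem_product, Finset.mem_range] at this
  obtain ⟨-, hj⟩ := this
  rcases s with ⟨b, j⟩
  fin_cases b
  · exact hx j (by omega)
  · exact hy j (by omega)

lemma isNilpotent_coeff_sub (x y : WittVector p A) (n : ℕ)
    (hx : ∀ i ≤ n, IsNilpotent (x.coeff i)) (hy : ∀ i ≤ n, IsNilpotent (y.coeff i)) :
    IsNilpotent ((x - y).coeff n) := by
  rw [WittVector.sub_coeff]
  apply isNilpotent_aeval _ (constantCoeff_wittSub p n)
  intro s hs
  have := WittVector.wittSub_vars (p := p) n hs
  simp only [Finset.mem_product, Finset.mem_range] at this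
  obtain ⟨-, hj⟩ := this
  rcases s with ⟨b, j⟩
  fin_cases b
  · exact hx j (by omega)
  · exact hy j (by omega)



lemma shift_eq (x : WittVector p A) (h : x.coeff 0 = 0) :
    verschiebung (WittVector.mk p fun i => x.coeff (i + 1)) = x := by
  ext i
  cases i with
  | zero => rw [verschiebung_coeff_zero, h]
  | succ j => rw [verschiebung_coeff_succ, WittVector.coeff_mk]

lemma exists_iterate_verschiebung (n : ℕ) (x : WittVector p A) (h : ∀ i < n, x.coeff i = 0) :
    ∃ y, verschiebung^[n] y = x := by
  induction n generalizing x with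
  | zero => exact ⟨x, rfl⟩
  | succ n ih =>
    set y := WittVector.mk p fun i => x.coeff (i + 1) with hy
    have h0 : verschiebung y = x := shift_eq x (h 0 (by omega))
    obtain ⟨z, hz⟩ := ih y (fun i hi => by rw [hy, WittVector.coeff_mk]; exact h (i+1) (by omega))
    exact ⟨z, by rw [iterate_succ_apply', hz, h0]⟩

lemma coeff_iterate_verschiebung_lt (x : WittVector p A) {i n : ℕ} (h : i < n) :
    (verschiebung^[n] x).coeff i = 0 := by
  induction n generalizing i with
  | zero => omega
  | succ n ih =>
    rw [iterate_succ_apply']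
    cases i with
    | zero => exact verschiebung_coeff_zero _
    | succ j => rw [verschiebung_coeff_succ]; exact ih (by omega)

lemma iterate_frobenius_natCast (n k : ℕ) :
    (⇑(WittVector.frobenius : WittVector p A →+* WittVector p A))^[n] (k : WittVector p A) = k := by
  induction n with
  | zero => rfl
  | succ n ih => rw [Function.iterate_succ_apply, map_natCast, ih]

lemma iterate_frobenius_iterate_verschiebung (n : ℕ) (x : WittVector p A) :
    frobenius^[n] (verschiebung^[n] x) = x * (p : WittVector p A) ^ n := by
  induction n generalizing x with
  | zero => simp
  | succ n ih =>
    rw [iterate_succ_apply' (f := verschiebung), iterate_succ_apply (f := ⇑WittVector.frobenius),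
      frobenius_verschiebung, iterate_map_mul, ih, iterate_frobenius_natCast,
      pow_succ, mul_assoc]

lemma iterate_verschiebung_mul_self (n : ℕ) (x y : WittVector p A) :
    verschiebung^[n] x * verschiebung^[n] y
      = verschiebung^[n] (x * y * (p : WittVector p A) ^ n) := by
  rw [iterate_verschiebung_mul_left, iterate_frobenius_iterate_verschiebung, mul_assoc]

lemma verschiebung_pow (j : ℕ) (y : WittVector p A) :
    (verschiebung y) ^ (j + 1) = verschiebung (y ^ (j + 1) * (p : WittVector p A) ^ j) := by
  induction j with
  | zero => simp
  | succ j ih =>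
    rw [pow_succ, ih]
    have := iterate_verschiebung_mul_self (p := p) (A := A) 1 (y ^ (j + 1) * (p : WittVector p A) ^ j) y
    simp only [iterate_one] at this
    rw [this]
    ring_nf

lemma isNilpotent_truncate (m : ℕ) (x : WittVector p A)
    (h : ∀ i < m, IsNilpotent (x.coeff i)) :
    IsNilpotent (WittVector.truncate m x) := by
  induction m generalizing x with
  | zero =>
    have : Subsingleton (TruncatedWittVector p 0 A) :=
      ⟨fun a b => TruncatedWittVector.ext (fun i => i.elim0)⟩
    exact ⟨1, Subsingleton.elim _ _⟩
  | succ m ih =>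
    obtain ⟨K, hK⟩ := h 0 (by omega)
    set c := x.coeff 0 with hc
    set z := x - teichmuller p c with hz
    have hz0 : z.coeff 0 = 0 := by
      have : (WittVector.constantCoeff : WittVector p A →+* A) z
          = (WittVector.constantCoeff : WittVector p A →+* A) x
            - (WittVector.constantCoeff : WittVector p A →+* A) (teichmuller p c) := map_sub _ _ _
      simpa [WittVector.constantCoeff, hz, teichmuller_coeff_zero, ← hc] using this
    set y := WittVector.mk p fun i => z.coeff (i + 1) with hy
    have hVy : verschiebung y = z := shift_eq z hz0
    have hynil : ∀ i < m, IsNilpotent (y.coeff i) := by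
      intro i hi
      rw [hy, WittVector.coeff_mk, hz]
      apply isNilpotent_coeff_sub
      · intro j hj; exact h j (by omega)
      · intro j _
        cases j with
        | zero => rw [teichmuller_coeff_zero]; exact ⟨K, hK⟩
        | succ j => rw [teichmuller_coeff_pos p c _ (by omega)]; exact ⟨1, pow_one 0⟩
    obtain ⟨K₁, hK₁⟩ := ih y hynil
    -- the Verschiebung part is nilpotent
    have hVnil : (WittVector.truncate (m + 1) (verschiebung y)) ^ (K₁ + 1) = 0 := by
      rw [← map_pow, verschiebung_pow]
      rw [← RingHom.mem_ker, WittVector.mem_ker_truncate]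
      intro i hi
      cases i with
      | zero => exact verschiebung_coeff_zero _
      | succ j =>
        rw [verschiebung_coeff_succ]
        have : WittVector.truncate m (y ^ (K₁ + 1) * (p : WittVector p A) ^ K₁) = 0 := by
          rw [map_mul, map_pow, pow_succ, hK₁, zero_mul, zero_mul]
        rw [← RingHom.mem_ker, WittVector.mem_ker_truncate] at this
        exact this j (by omega)
    have hTnil : (WittVector.truncate (m + 1) (teichmuller p c)) ^ K = 0 := by
      rw [← map_pow, ← map_pow, hK, teichmuller_zero, map_zero]
    have hx : x = teichmuller p c + verschiebung y := by rw [hVy, hz]; ring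
    rw [hx, map_add]
    exact Commute.isNilpotent_add (Commute.all _ _) ⟨K, hTnil⟩ ⟨K₁ + 1, hVnil⟩

lemma truncate_fourth_pow_eq_zero (n : ℕ) (hA : (p : A) ^ (3 * n) = 0) (x : WittVector p A)
    (hx : ∀ i < n, x.coeff i = 0) : WittVector.truncate (n + 1) (x ^ 4) = 0 := by
  obtain ⟨w, rfl⟩ := exists_iterate_verschiebung n x hx
  have h2 : verschiebung^[n] w * verschiebung^[n] w
      = verschiebung^[n] (w * w * (p : WittVector p A) ^ n) :=
    iterate_verschiebung_mul_self n w w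
  have h4 : (verschiebung^[n] w) ^ 4
      = verschiebung^[n] (w ^ 4 * (p : WittVector p A) ^ (3 * n)) := by
    have : (verschiebung^[n] w) ^ 4
        = (verschiebung^[n] w * verschiebung^[n] w) * (verschiebung^[n] w * verschiebung^[n] w) := by
      ring
    rw [this, h2, iterate_verschiebung_mul_self]
    congr 1
    ring
  rw [h4, ← RingHom.mem_ker, WittVector.mem_ker_truncate]
  intro i hi
  rcases Nat.lt_or_ge i n with hin | hin
  · exact coeff_iterate_verschiebung_lt _ hin
  · have hieq : i = n := by omega
    subst hieq
    have := iterate_verschiebung_coeff (p := p) (w ^ 4 * (p : WittVector p A) ^ (3 * i)) i 0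
    rw [zero_add] at this
    rw [this]
    have : (WittVector.constantCoeff : WittVector p A →+* A)
        (w ^ 4 * (p : WittVector p A) ^ (3 * i)) = (w.coeff 0) ^ 4 * (p : A) ^ (3 * i) := by
      rw [map_mul, map_pow, map_pow, map_natCast]
      rfl
    simpa [WittVector.constantCoeff, hA] using this

section TruncMap

variable {B C : Type*} [CommRing B] [CommRing C]

lemma truncate_out {m : ℕ} (x : TruncatedWittVector p m B) :
    WittVector.truncate m x.out = x := by
  ext i
  rw [WittVector.coeff_truncate, TruncatedWittVector.coeff_out]

lemma coeff_out_ge {m : ℕ} (x : TruncatedWittVector p m B) {i : ℕ} (h : m ≤ i) :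
    x.out.coeff i = 0 := by
  simp only [TruncatedWittVector.out, WittVector.coeff_mk]
  rw [dif_neg (by omega)]

lemma truncate_map_congr (f : B →+* C) (m : ℕ) {x y : WittVector p B}
    (h : WittVector.truncate m x = WittVector.truncate m y) :
    WittVector.truncate m (WittVector.map f x) = WittVector.truncate m (WittVector.map f y) := by
  ext i
  rw [WittVector.coeff_truncate, WittVector.coeff_truncate, WittVector.map_coeff,
    WittVector.map_coeff]
  congr 1
  have := congrArg (fun z => TruncatedWittVector.coeff i z) h
  simpa only [WittVector.coeff_truncate] using this

/-- The functorial map on truncated Witt vectors. -/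
noncomputable def truncWittMap (f : B →+* C) (m : ℕ) :
    TruncatedWittVector p m B →+* TruncatedWittVector p m C where
  toFun ζ := WittVector.truncate m (WittVector.map f ζ.out)
  map_one' := by
    have h : WittVector.truncate m ((1 : TruncatedWittVector p m B).out)
        = WittVector.truncate m (1 : WittVector p B) := by
      rw [truncate_out, map_one]
    show WittVector.truncate m (WittVector.map f (1 : TruncatedWittVector p m B).out) = _
    rw [truncate_map_congr f m h, map_one, map_one]
  map_mul' ζ ξ := by
    have h : WittVector.truncate m ((ζ * ξ).out)
        = WittVector.truncate m (ζ.out * ξ.out) := by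
      rw [truncate_out, map_mul, truncate_out, truncate_out]
    show WittVector.truncate m (WittVector.map f (ζ * ξ).out) = _
    rw [truncate_map_congr f m h, map_mul, map_mul]
  map_zero' := by
    have h : WittVector.truncate m ((0 : TruncatedWittVector p m B).out)
        = WittVector.truncate m (0 : WittVector p B) := by
      rw [truncate_out, map_zero]
    show WittVector.truncate m (WittVector.map f (0 : TruncatedWittVector p m B).out) = _
    rw [truncate_map_congr f m h, map_zero, map_zero]
  map_add' ζ ξ := by
    have h : WittVector.truncate m ((ζ + ξ).out)
        = WittVector.truncate m (ζ.out + ξ.out) := by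
      rw [truncate_out, map_add, truncate_out, truncate_out]
    show WittVector.truncate m (WittVector.map f (ζ + ξ).out) = _
    rw [truncate_map_congr f m h, map_add, map_add]

lemma coeff_truncWittMap (f : B →+* C) (m : ℕ) (ζ : TruncatedWittVector p m B) (i : Fin m) :
    (truncWittMap f m ζ).coeff i = f (ζ.coeff i) := by
  show (WittVector.truncate m (WittVector.map f ζ.out)).coeff i = _
  rw [WittVector.coeff_truncate, WittVector.map_coeff, TruncatedWittVector.coeff_out]

lemma truncWittMap_wittVector_truncate (f : B →+* C) (m : ℕ) (x : WittVector p B) :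
    truncWittMap f m (WittVector.truncate m x)
      = WittVector.truncate m (WittVector.map f x) := by
  ext i
  rw [coeff_truncWittMap, WittVector.coeff_truncate, WittVector.coeff_truncate,
    WittVector.map_coeff]

lemma truncWittMap_surjective (f : B →+* C) (hf : Function.Surjective f) (m : ℕ) :
    Function.Surjective (truncWittMap (p := p) f m) := by
  intro ζ
  obtain ⟨z, rfl⟩ := WittVector.truncate_surjective p m C ζ
  obtain ⟨z', rfl⟩ := WittVector.map_surjective f hf z
  exact ⟨WittVector.truncate m z', truncWittMap_wittVector_truncate f m z'⟩

end TruncMap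

section Tower

variable (p) (R : Type u) [CommRing R]

/-- `R / p^(n+1)`. -/
abbrev Rq (n : ℕ) : Type u := R ⧸ (Ideal.span {(p : R) ^ (n + 1)} : Ideal R)

/-- The `n`-th stage `W_{n+1}(R/p^(n+1))` of the tower. -/
abbrev Qn (n : ℕ) : Type u := TruncatedWittVector p (n + 1) (Rq p R n)

lemma pow_p_eq_zero_Rq (n : ℕ) : (p : Rq p R n) ^ (n + 1) = 0 := by
  have : ((p : R) ^ (n + 1) : R) ∈ Ideal.span {(p : R) ^ (n + 1)} :=
    Ideal.mem_span_singleton_self _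
  have h := (Ideal.Quotient.eq_zero_iff_mem).2 this
  rw [← h, map_pow, map_natCast]

/-- Reduction `R/p^(n+2) → R/p^(n+1)`. -/
def facQ (n : ℕ) : Rq p R (n + 1) →+* Rq p R n :=
  Ideal.Quotient.factor (by
    apply Ideal.span_singleton_le_span_singleton.2
    exact ⟨(p : R), by ring⟩)

lemma facQ_mk (n : ℕ) (r : R) :
    facQ p R n (Ideal.Quotient.mk _ r) = Ideal.Quotient.mk _ r :=
  Ideal.Quotient.factor_mk _ _

/-- The transition map of the tower. -/
noncomputable def Sn (n : ℕ) : Qn p R (n + 1) →+* Qn p R n :=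
  (TruncatedWittVector.truncate (by omega : n + 1 ≤ n + 2)).comp
    (truncWittMap (facQ p R n) (n + 2))

/-- The projection from `W(R)` to the `n`-th stage. -/
noncomputable def tau (n : ℕ) : WittVector p R →+* Qn p R n :=
  (WittVector.truncate (n + 1)).comp (WittVector.map (Ideal.Quotient.mk _))

lemma coeff_tau (n : ℕ) (x : WittVector p R) (i : Fin (n + 1)) :
    (tau p R n x).coeff i = Ideal.Quotient.mk _ (x.coeff i) := by
  show ((WittVector.truncate (n + 1)) (WittVector.map (Ideal.Quotient.mk _) x)).coeff i = _
  rw [WittVector.coeff_truncate, WittVector.map_coeff]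

lemma Sn_tau (n : ℕ) (x : WittVector p R) : Sn p R n (tau p R (n + 1) x) = tau p R n x := by
  ext i
  simp only [Sn, RingHom.comp_apply, TruncatedWittVector.coeff_truncate, coeff_truncWittMap,
    coeff_tau, facQ_mk]
  rfl

lemma facQ_surjective (n : ℕ) : Function.Surjective (facQ p R n) := by
  intro c
  obtain ⟨r, rfl⟩ := Ideal.Quotient.mk_surjective c
  exact ⟨Ideal.Quotient.mk _ r, facQ_mk p R n r⟩

lemma Sn_surjective (n : ℕ) : Function.Surjective (Sn p R n) := by
  simp only [Sn, RingHom.coe_comp]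
  exact (TruncatedWittVector.truncate_surjective (p := p) (by omega : n + 1 ≤ n + 2)).comp
    (truncWittMap_surjective _ (facQ_surjective p R n) _)

lemma ker_Sn_isNilpotent (n : ℕ) (ζ : Qn p R (n + 1)) (hζ : Sn p R n ζ = 0) :
    IsNilpotent ζ := by
  have hp2 : (p : Rq p R (n + 1)) ^ (n + 2) = 0 := pow_p_eq_zero_Rq p R (n + 1)
  -- the first `n+1` coefficients of `ζ` are nilpotent
  have hnil : ∀ i : Fin (n + 2), (i : ℕ) < n + 1 → IsNilpotent (ζ.coeff i) := by
    intro i hi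
    have h0 : facQ p R n (ζ.coeff i) = 0 := by
      have h1 := congrArg (fun z => TruncatedWittVector.coeff ⟨(i : ℕ), hi⟩ z) hζ
      simp only [Sn, RingHom.comp_apply, TruncatedWittVector.coeff_truncate,
        coeff_truncWittMap, TruncatedWittVector.coeff_zero] at h1
      have hcast : (Fin.castLE (by omega : n + 1 ≤ n + 2) (⟨(i : ℕ), hi⟩ : Fin (n + 1))) = i :=
        Fin.ext rfl
      rw [hcast] at h1
      exact h1
    obtain ⟨r, hr⟩ := Ideal.Quotient.mk_surjective (ζ.coeff i)
    rw [← hr, facQ_mk] at h0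
    have hrmem : r ∈ (Ideal.span {(p : R) ^ (n + 1)} : Ideal R) :=
      (Ideal.Quotient.eq_zero_iff_mem).1 h0
    obtain ⟨t, ht⟩ := Ideal.mem_span_singleton'.1 hrmem
    refine ⟨2, ?_⟩
    rw [← hr, ← ht]
    have : (Ideal.Quotient.mk (Ideal.span {(p : R) ^ (n + 2)}) (t * (p : R) ^ (n + 1))) ^ 2
        = (p : Rq p R (n + 1)) ^ (n + 2) * ((p : Rq p R (n+1)) ^ n
          * (Ideal.Quotient.mk _ t) ^ 2) := by
      rw [map_mul, map_pow, map_natCast]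
      ring
    rw [this, hp2, zero_mul]
  set x : WittVector p (Rq p R (n + 1)) := ζ.out with hx
  have hxc : ∀ i : Fin (n + 2), x.coeff i = ζ.coeff i := fun i =>
    TruncatedWittVector.coeff_out _ _
  set y : WittVector p (Rq p R (n + 1)) := (WittVector.truncate (n + 1) x).out with hy
  have hyc : ∀ i : ℕ, (h : i < n + 1) → y.coeff i = x.coeff i := by
    intro i h
    rw [hy]
    have := TruncatedWittVector.coeff_out (WittVector.truncate (n + 1) x) (⟨i, h⟩ : Fin (n+1))
    rw [this, WittVector.coeff_truncate]
  have hyc' : ∀ i : ℕ, n + 1 ≤ i → y.coeff i = 0 := fun i h => coeff_out_ge _ h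
  set η := WittVector.truncate (n + 2) y with hη
  have hηnil : IsNilpotent η := by
    apply isNilpotent_truncate
    intro i hi
    rcases Nat.lt_or_ge i (n + 1) with h | h
    · rw [hyc i h, hxc ⟨i, by omega⟩]
      exact hnil ⟨i, by omega⟩ h
    · rw [hyc' i h]; exact ⟨1, pow_one 0⟩
  set ξ := ζ - η with hξ
  have hζout : WittVector.truncate (n + 2) x = ζ := truncate_out ζ
  have htr : TruncatedWittVector.truncate (by omega : n + 1 ≤ n + 2) ξ = 0 := by
    rw [hξ, map_sub, hη, ← hζout]
    rw [TruncatedWittVector.truncate_wittVector_truncate,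
      TruncatedWittVector.truncate_wittVector_truncate]
    rw [sub_eq_zero]
    ext i
    rw [WittVector.coeff_truncate, WittVector.coeff_truncate, hyc i i.2]
  have hξc : ∀ i : ℕ, (h : i < n + 1) → ξ.coeff ⟨i, by omega⟩ = 0 := by
    intro i h
    have := congrArg (fun z => TruncatedWittVector.coeff ⟨i, h⟩ z) htr
    simp only [TruncatedWittVector.coeff_zero] at this
    rw [← this, TruncatedWittVector.coeff_truncate]
    congr 1
  have hξ4 : ξ ^ 4 = 0 := by
    have h3n : (p : Rq p R (n + 1)) ^ (3 * (n + 1)) = 0 := by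
      have : 3 * (n + 1) = (n + 2) + (2 * n + 1) := by ring
      rw [this, pow_add, hp2, zero_mul]
    have h4 := truncate_fourth_pow_eq_zero (n + 1) h3n ξ.out (by
      intro i hi
      have := TruncatedWittVector.coeff_out ξ (⟨i, by omega⟩ : Fin (n+2))
      rw [this, hξc i hi])
    calc ξ ^ 4 = (WittVector.truncate (n + 2) ξ.out) ^ 4 := by rw [truncate_out]
    _ = WittVector.truncate (n + 2) (ξ.out ^ 4) := by rw [map_pow]
    _ = 0 := h4
  have : ζ = η + ξ := by rw [hξ]; ring
  rw [this]
  exact Commute.isNilpotent_add (Commute.all _ _) hηnil ⟨4, hξ4⟩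

end Tower

section MatrixNil

lemma isNilpotent_matrix {B : Type*} [CommRing B] {k : ℕ}
    (M : Matrix (Fin k) (Fin k) B) (h : ∀ i j, IsNilpotent (M i j)) : IsNilpotent M := by
  set I : Ideal B := Ideal.span (Set.range fun ij : Fin k × Fin k => M ij.1 ij.2) with hI
  have hfg : I.FG := Submodule.fg_span (Set.finite_range _)
  have hle : I ≤ (⊥ : Ideal B).radical := by
    rw [hI, Ideal.span_le]
    rintro x ⟨ij, rfl⟩
    exact h ij.1 ij.2
  obtain ⟨t, ht⟩ := Ideal.exists_pow_le_of_le_radical_of_fg hle hfg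
  have key : ∀ m : ℕ, ∀ i j, (M ^ (m + 1)) i j ∈ I ^ (m + 1) := by
    intro m
    induction m with
    | zero =>
      intro i j
      rw [pow_one, pow_one]
      exact Ideal.subset_span ⟨(i, j), rfl⟩
    | succ m ih =>
      intro i j
      rw [show M ^ (m + 1 + 1) = M ^ (m + 1) * M from pow_succ _ _, Matrix.mul_apply,
        show I ^ (m + 1 + 1) = I ^ (m + 1) * I from pow_succ _ _]
      apply Ideal.sum_mem
      intro l _
      exact Ideal.mul_mem_mul (ih i l) (Ideal.subset_span ⟨(l, j), rfl⟩)
    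
  refine ⟨t + 1, ?_⟩
  ext i j
  have := key t i j
  have hmem : (M ^ (t + 1)) i j ∈ (⊥ : Ideal B) :=
    (le_trans (Ideal.pow_le_pow_right (by omega)) ht) this
  simpa using hmem

end MatrixNil

section Seq

variable (p) (R : Type u) [CommRing R]

lemma exists_idem_lift (n : ℕ) {k : ℕ} (e : Matrix (Fin k) (Fin k) (Qn p R n))
    (he : IsIdempotentElem e) :
    ∃ e' : Matrix (Fin k) (Fin k) (Qn p R (n + 1)),
      IsIdempotentElem e' ∧ (Sn p R n).mapMatrix e' = e := by
  have hker : ∀ x ∈ RingHom.ker ((Sn p R n).mapMatrix (m := Fin k)), IsNilpotent x := by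
    intro x hx
    apply isNilpotent_matrix
    intro i j
    apply ker_Sn_isNilpotent
    have := congrArg (fun M => M i j) (show (Sn p R n).mapMatrix x = 0 from hx)
    simpa [RingHom.mapMatrix_apply] using this
  have hrange : e ∈ ((Sn p R n).mapMatrix (m := Fin k)).range := by
    refine ⟨Matrix.of fun i j => Classical.choose (Sn_surjective p R n (e i j)), ?_⟩
    refine Matrix.ext fun i j => ?_
    simp only [RingHom.mapMatrix_apply, Matrix.map_apply, Matrix.of_apply]
    exact Classical.choose_spec (Sn_surjective p R n (e i j))
  exact exists_isIdempotentElem_eq_of_ker_isNilpotent _ hker e hrange he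

noncomputable def idemSeq {k : ℕ} (E0 : Matrix (Fin k) (Fin k) (Qn p R 0))
    (hE0 : IsIdempotentElem E0) :
    (n : ℕ) → {e : Matrix (Fin k) (Fin k) (Qn p R n) // IsIdempotentElem e}
  | 0 => ⟨E0, hE0⟩
  | (n + 1) =>
    ⟨(exists_idem_lift p R n (idemSeq E0 hE0 n).1 (idemSeq E0 hE0 n).2).choose,
     (exists_idem_lift p R n (idemSeq E0 hE0 n).1 (idemSeq E0 hE0 n).2).choose_spec.1⟩

lemma idemSeq_compat {k : ℕ} (E0 : Matrix (Fin k) (Fin k) (Qn p R 0))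
    (hE0 : IsIdempotentElem E0) (n : ℕ) :
    (Sn p R n).mapMatrix (idemSeq p R E0 hE0 (n + 1)).1 = (idemSeq p R E0 hE0 n).1 := by
  show (Sn p R n).mapMatrix
    (exists_idem_lift p R n (idemSeq p R E0 hE0 n).1 (idemSeq p R E0 hE0 n).2).choose = _
  exact (exists_idem_lift p R n (idemSeq p R E0 hE0 n).1 (idemSeq p R E0 hE0 n).2).choose_spec.2

end Seq

section Limit

variable (p) (R : Type u) [CommRing R]

lemma coeff_Sn_apply (n : ℕ) (ζ : Qn p R (n + 1)) (i : ℕ) (hi : i < n + 1) :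
    (Sn p R n ζ).coeff ⟨i, hi⟩ = facQ p R n (ζ.coeff ⟨i, by omega⟩) := by
  simp only [Sn, RingHom.comp_apply, TruncatedWittVector.coeff_truncate, coeff_truncWittMap]
  exact congrArg (fun t : Fin (n + 2) => facQ p R n (ζ.coeff t)) (Fin.ext rfl)

variable {k : ℕ}

lemma eseq_red (Eseq : ∀ n, Matrix (Fin k) (Fin k) (Qn p R n))
    (hcomp : ∀ n, (Sn p R n).mapMatrix (Eseq (n + 1)) = Eseq n)
    (a b : Fin k) (i m n : ℕ) (him : i < m + 1) (hmn : m ≤ n) :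
    ∀ r : R, Ideal.Quotient.mk (Ideal.span {(p : R) ^ (n + 1)}) r
        = (Eseq n a b).coeff ⟨i, by omega⟩ →
      Ideal.Quotient.mk (Ideal.span {(p : R) ^ (m + 1)}) r
        = (Eseq m a b).coeff ⟨i, by omega⟩ := by
  induction n, hmn using Nat.le_induction with
  | base => exact fun r hr => hr
  | succ n hmn ih =>
    intro r hr
    apply ih
    have hstep := congrArg
      (fun Mt => TruncatedWittVector.coeff (⟨i, by omega⟩ : Fin (n + 1)) (Mt a b)) (hcomp n)
    simp only [RingHom.mapMatrix_apply, Matrix.map_apply] at hstep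
    rw [← hstep, coeff_Sn_apply p R n _ i (by omega), ← hr]
    exact (facQ_mk p R n r).symm

variable [IsAdicComplete (Ideal.span {(p : R)}) R]

lemma exists_witt_limit (Eseq : ∀ n, Matrix (Fin k) (Fin k) (Qn p R n))
    (hcomp : ∀ n, (Sn p R n).mapMatrix (Eseq (n + 1)) = Eseq n) :
    ∃ W : Matrix (Fin k) (Fin k) (WittVector p R),
      ∀ n, (tau p R n).mapMatrix W = Eseq n := by
  have main : ∀ (a b : Fin k) (i : ℕ), ∃ L : R, ∀ (n : ℕ) (hn : i < n + 1),
      Ideal.Quotient.mk (Ideal.span {(p : R) ^ (n + 1)}) L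
        = (Eseq n a b).coeff ⟨i, hn⟩ := by
    intro a b i
    set ρ : ℕ → R := fun n =>
      Classical.choose (Ideal.Quotient.mk_surjective ((Eseq (i + n) a b).coeff
        ⟨i, by omega⟩)) with hρ
    have hρ_spec : ∀ n : ℕ, Ideal.Quotient.mk (Ideal.span {(p : R) ^ (i + n + 1)}) (ρ n)
        = (Eseq (i + n) a b).coeff ⟨i, by omega⟩ := fun n =>
      Classical.choose_spec (Ideal.Quotient.mk_surjective _)
    have span_le : ∀ {s t : ℕ}, s ≤ t →
        (Ideal.span {(p : R) ^ t} : Ideal R) ≤ Ideal.span {(p : R) ^ s} := by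
      intro s t hst
      exact Ideal.span_singleton_le_span_singleton.2 (pow_dvd_pow _ hst)
    have hcauchy : ∀ {m n : ℕ}, m ≤ n →
        ρ m ≡ ρ n [SMOD ((Ideal.span {(p : R)}) ^ m • ⊤ : Submodule R R)] := by
      intro m n hmn
      rw [Ideal.smul_eq_mul, Ideal.mul_top, SModEq.sub_mem, Ideal.span_singleton_pow]
      have hA := hρ_spec m
      have hB := eseq_red p R Eseq hcomp a b i (i + m) (i + n) (by omega) (by omega)
        (ρ n) (hρ_spec n)
      have : Ideal.Quotient.mk (Ideal.span {(p : R) ^ (i + m + 1)}) (ρ m - ρ n) = 0 := by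
        rw [map_sub, hA, hB, sub_self]
      have hmem := (Ideal.Quotient.eq_zero_iff_mem).1 this
      exact span_le (by omega) hmem
    obtain ⟨L, hL⟩ := IsPrecomplete.prec inferInstance hcauchy
    refine ⟨L, ?_⟩
    intro n hn
    have h1 := hL (n + 1)
    rw [Ideal.smul_eq_mul, Ideal.mul_top, SModEq.sub_mem, Ideal.span_singleton_pow] at h1
    have h2 : Ideal.Quotient.mk (Ideal.span {(p : R) ^ (n + 1)}) L
        = Ideal.Quotient.mk (Ideal.span {(p : R) ^ (n + 1)}) (ρ (n + 1)) := by
      rw [← sub_eq_zero, ← map_sub]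
      exact (Ideal.Quotient.eq_zero_iff_mem).2 (neg_mem_iff.1 (by simpa using h1))
    rw [h2]
    exact eseq_red p R Eseq hcomp a b i n (i + (n + 1)) (by omega) (by omega)
      (ρ (n + 1)) (hρ_spec (n + 1))
  choose L hL using main
  refine ⟨Matrix.of fun a b => WittVector.mk p fun i => L a b i, fun n => ?_⟩
  refine Matrix.ext fun a b => ?_
  apply TruncatedWittVector.ext
  intro j
  have : ((tau p R n).mapMatrix (Matrix.of fun a b => WittVector.mk p fun i => L a b i)) a b
      = tau p R n (WittVector.mk p fun i => L a b i) := by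
    simp [RingHom.mapMatrix_apply]
  rw [this, coeff_tau]
  have hco : (WittVector.mk p fun i => L a b i).coeff (j : ℕ) = L a b (j : ℕ) := by
    rw [WittVector.coeff_mk]
  rw [hco]
  exact hL a b (j : ℕ) n j.2

end Limit

section W1

variable {p : ℕ} [hp : Fact p.Prime]

/-- `W_1(B) ≃ B`. -/
noncomputable def w1equiv {B : Type*} [CommRing B] : TruncatedWittVector p 1 B ≃+* B where
  toFun ζ := ζ.coeff ⟨0, Nat.zero_lt_one⟩
  invFun b := WittVector.truncate 1 (WittVector.mk p fun _ => b)
  left_inv ζ := by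
    apply TruncatedWittVector.ext
    intro i
    have hi : i = ⟨0, Nat.zero_lt_one⟩ := Subsingleton.elim _ _
    subst hi
    rw [WittVector.coeff_truncate, WittVector.coeff_mk]
  right_inv b := by
    show (WittVector.truncate 1 (WittVector.mk p fun _ => b)).coeff ⟨0, Nat.zero_lt_one⟩ = b
    rw [WittVector.coeff_truncate, WittVector.coeff_mk]
  map_mul' ζ ξ := by
    have h : ζ * ξ = WittVector.truncate 1 (ζ.out * ξ.out) := by
      rw [map_mul, truncate_out, truncate_out]
    show (ζ * ξ).coeff ⟨0, Nat.zero_lt_one⟩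
        = ζ.coeff ⟨0, Nat.zero_lt_one⟩ * ξ.coeff ⟨0, Nat.zero_lt_one⟩
    rw [h, WittVector.coeff_truncate]
    show (ζ.out * ξ.out).coeff 0 = _
    rw [WittVector.mul_coeff_zero]
    exact congrArg₂ (· * ·) (TruncatedWittVector.coeff_out ζ ⟨0, Nat.zero_lt_one⟩)
      (TruncatedWittVector.coeff_out ξ ⟨0, Nat.zero_lt_one⟩)
  map_add' ζ ξ := by
    have h : ζ + ξ = WittVector.truncate 1 (ζ.out + ξ.out) := by
      rw [map_add, truncate_out, truncate_out]
    show (ζ + ξ).coeff ⟨0, Nat.zero_lt_one⟩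
        = ζ.coeff ⟨0, Nat.zero_lt_one⟩ + ξ.coeff ⟨0, Nat.zero_lt_one⟩
    rw [h, WittVector.coeff_truncate]
    show (ζ.out + ξ.out).coeff 0 = _
    rw [WittVector.add_coeff_zero]
    exact congrArg₂ (· + ·) (TruncatedWittVector.coeff_out ζ ⟨0, Nat.zero_lt_one⟩)
      (TruncatedWittVector.coeff_out ξ ⟨0, Nat.zero_lt_one⟩)

lemma w1equiv_apply {B : Type*} [CommRing B] (ζ : TruncatedWittVector p 1 B) :
    w1equiv ζ = ζ.coeff ⟨0, Nat.zero_lt_one⟩ := rfl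

end W1

section Haus

variable (p : ℕ) [hp : Fact p.Prime] (R : Type u) [CommRing R]
  [IsAdicComplete (Ideal.span {(p : R)}) R]

lemma eq_zero_of_tau_eq_zero (x : WittVector p R) (h : ∀ n, tau p R n x = 0) : x = 0 := by
  apply WittVector.ext
  intro i
  rw [WittVector.zero_coeff]
  refine IsHausdorff.haus (inferInstance : IsHausdorff (Ideal.span {(p : R)}) R) _ fun m => ?_
  rw [Ideal.smul_eq_mul, Ideal.mul_top, SModEq.zero, Ideal.span_singleton_pow]
  have hn := h (max m i)
  have hcoeff := congrArg
    (fun ζ => TruncatedWittVector.coeff (⟨i, by omega⟩ : Fin (max m i + 1)) ζ) hn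
  simp only [TruncatedWittVector.coeff_zero] at hcoeff
  rw [coeff_tau] at hcoeff
  have hmem := (Ideal.Quotient.eq_zero_iff_mem).1 hcoeff
  exact Ideal.span_singleton_le_span_singleton.2 (pow_dvd_pow _ (by omega)) hmem

end Haus

section ModuleSide

variable {A : Type*} [CommRing A] (S : Type*) [CommRing S] [Algebra A S] {k : ℕ}

lemma toLin'_idem (G : Matrix (Fin k) (Fin k) A) (hG : IsIdempotentElem G) :
    (Matrix.toLin' G) ∘ₗ (Matrix.toLin' G) = Matrix.toLin' G := by
  rw [← Matrix.toLin'_mul, hG]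

set_option synthInstance.maxHeartbeats 1000000 in
lemma baseChange_range_idem (G : Matrix (Fin k) (Fin k) A) (hG : IsIdempotentElem G) :
    Nonempty ((S ⊗[A] (LinearMap.range (Matrix.toLin' G))) ≃ₗ[S]
      LinearMap.range (Matrix.toLin' (G.map (algebraMap A S)))) := by
  classical
  set g : (Fin k → A) →ₗ[A] (Fin k → A) := Matrix.toLin' G with hg
  set N : Submodule A (Fin k → A) := LinearMap.range g with hN
  set G' : Matrix (Fin k) (Fin k) S := G.map (algebraMap A S) with hG'def
  set h' : (Fin k → S) →ₗ[S] (Fin k → S) := Matrix.toLin' G' with hh'def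
  have hgg : g ∘ₗ g = g := toLin'_idem G hG
  have hG' : IsIdempotentElem G' := by
    show G' * G' = G'
    rw [hG'def, ← Matrix.map_mul, hG]
  have hh' : h' ∘ₗ h' = h' := toLin'_idem G' hG'
  set ι : N →ₗ[A] (Fin k → A) := N.subtype with hι
  set πp : (Fin k → A) →ₗ[A] N :=
    LinearMap.codRestrict N g (fun x => LinearMap.mem_range_self g x) with hπp
  have hιπ : ι ∘ₗ πp = g := LinearMap.subtype_comp_codRestrict _ _ _
  have hπι : πp ∘ₗ ι = LinearMap.id := by
    refine LinearMap.ext fun x => ?_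
    apply Subtype.ext
    show g (x : Fin k → A) = (x : Fin k → A)
    obtain ⟨y, hy⟩ := x.2
    rw [← hy]
    exact LinearMap.congr_fun hgg y
  set φ : S ⊗[A] (Fin k → A) ≃ₗ[S] (Fin k → S) := TensorProduct.piScalarRight A S S (Fin k)
    with hφ
  have hcomm : ∀ z : S ⊗[A] (Fin k → A), φ (g.baseChange S z) = h' (φ z) := by
    intro z
    induction z using TensorProduct.induction_on with
    | zero => simp
    | tmul s v =>
      rw [LinearMap.baseChange_tmul]
      funext j
      simp only [hφ, TensorProduct.piScalarRight_apply, TensorProduct.piScalarRightHom_tmul]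
      rw [hh'def, Matrix.toLin'_apply]
      show (G.mulVec v j) • s = (G'.mulVec fun l => v l • s) j
      rw [Matrix.mulVec, Matrix.mulVec, dotProduct, dotProduct, Finset.sum_smul]
      refine Finset.sum_congr rfl fun l _ => ?_
      rw [hG'def, Matrix.map_apply, Algebra.smul_def, Algebra.smul_def, map_mul]
      ring
    | add z₁ z₂ h₁ h₂ => simp only [map_add, h₁, h₂]
  set F₁ : S ⊗[A] N →ₗ[S] (Fin k → S) := φ.toLinearMap ∘ₗ (ι.baseChange S) with hF₁def
  set F₂ : (Fin k → S) →ₗ[S] S ⊗[A] N := (πp.baseChange S) ∘ₗ φ.symm.toLinearMap with hF₂def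
  have hgι : g ∘ₗ ι = ι := by
    rw [← hιπ, LinearMap.comp_assoc, hπι, LinearMap.comp_id]
  have hF₁fix : ∀ z, h' (F₁ z) = F₁ z := by
    intro z
    show h' (φ (ι.baseChange S z)) = φ (ι.baseChange S z)
    rw [← hcomm]
    congr 1
    have : g.baseChange S ∘ₗ ι.baseChange S = ι.baseChange S := by
      rw [← LinearMap.baseChange_comp, hgι]
    exact LinearMap.congr_fun this z
  have hmem : ∀ z, F₁ z ∈ LinearMap.range h' := fun z => ⟨F₁ z, hF₁fix z⟩
  have hF₂F₁ : ∀ z, F₂ (F₁ z) = z := by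
    intro z
    show πp.baseChange S (φ.symm (φ (ι.baseChange S z))) = z
    rw [LinearEquiv.symm_apply_apply]
    have : πp.baseChange S ∘ₗ ι.baseChange S = LinearMap.id := by
      rw [← LinearMap.baseChange_comp, hπι, LinearMap.baseChange_id]
    exact LinearMap.congr_fun this z
  have hF₁F₂ : ∀ x ∈ LinearMap.range h', F₁ (F₂ x) = x := by
    rintro x ⟨y, rfl⟩
    show φ (ι.baseChange S (πp.baseChange S (φ.symm (h' y)))) = h' y
    have h1 : ι.baseChange S ∘ₗ πp.baseChange S = g.baseChange S := by
      rw [← LinearMap.baseChange_comp, hιπ]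
    rw [show ι.baseChange S (πp.baseChange S (φ.symm (h' y)))
        = g.baseChange S (φ.symm (h' y)) from LinearMap.congr_fun h1 _]
    rw [hcomm, LinearEquiv.apply_symm_apply]
    exact LinearMap.congr_fun hh' y
  refine ⟨LinearEquiv.ofLinear (LinearMap.codRestrict _ F₁ hmem)
    (F₂ ∘ₗ (LinearMap.range h').subtype) ?_ ?_⟩
  · refine LinearMap.ext fun x => ?_
    apply Subtype.ext
    show F₁ (F₂ (x : Fin k → S)) = (x : Fin k → S)
    exact hF₁F₂ _ x.2
  · refine LinearMap.ext fun z => ?_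
    show F₂ (F₁ z) = z
    exact hF₂F₁ z

end ModuleSide

end WittLift


/-- **Statement 10.** Let `p` be a prime and `R` a commutative ring that is
`p`-adically complete and separated.  Then every finite projective `R`-module lifts
to the `p`-typical Witt vectors: for every finitely generated projective `R`-module
`M` there is a finitely generated projective `W(R)`-module `N` together with an
isomorphism of `R`-modules `N ⊗_{W(R),w₀} R ≅ M`, where `w₀ : W(R) → R` is the zeroth
coefficient projection (it makes `R` a `W(R)`-algebra). -/
theorem finiteProjective_lifts_to_wittVectors
    (p : ℕ) [Fact p.Prime]
    (R : Type u) [CommRing R]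
    [IsAdicComplete (Ideal.span {(p : R)}) R]
    [Algebra (WittVector p R) R]
    (halg : ∀ x : WittVector p R, algebraMap (WittVector p R) R x = x.coeff 0)
    (M : Type u) [AddCommGroup M] [Module R M]
    [Module.Finite R M] [Module.Projective R M] :
    ∃ N : ModuleCat.{u} (WittVector p R),
      Module.Finite (WittVector p R) N ∧
      Module.Projective (WittVector p R) N ∧
      Nonempty ((R ⊗[WittVector p R] N) ≃ₗ[R] M) := by
  classical
  -- present `M` as the range of an idempotent endomorphism of `R^k`
  obtain ⟨k, πM, hπ⟩ := Module.Finite.exists_fin' R M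
  obtain ⟨sM, hs⟩ := Module.projective_lifting_property πM LinearMap.id hπ
  set h₀ : (Fin k → R) →ₗ[R] (Fin k → R) := sM ∘ₗ πM with hh₀
  have hps : ∀ x : M, πM (sM x) = x := fun x => by
    have := LinearMap.congr_fun hs x
    simpa using this
  have h₀idem : h₀ ∘ₗ h₀ = h₀ := by
    refine LinearMap.ext fun v => ?_
    show sM (πM (sM (πM v))) = sM (πM v)
    rw [hps]
  set E : Matrix (Fin k) (Fin k) R := LinearMap.toMatrix' h₀ with hE
  have hEidem : IsIdempotentElem E := by
    show E * E = E
    rw [hE, ← LinearMap.toMatrix'_comp, h₀idem]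
  have hEh₀ : Matrix.toLin' E = h₀ := Matrix.toLin'_toMatrix' h₀
  -- base stage of the tower
  set q1 : R →+* WittLift.Rq p R 0 := Ideal.Quotient.mk _ with hq1
  set ρ0 : R →+* WittLift.Qn p R 0 :=
    (WittLift.w1equiv (p := p) (B := WittLift.Rq p R 0)).symm.toRingHom.comp q1 with hρ0
  set E0 := ρ0.mapMatrix E with hE0def
  have hE0 : IsIdempotentElem E0 := by
    show E0 * E0 = E0
    rw [hE0def, ← map_mul, hEidem]
  obtain ⟨Wm, hWm⟩ := WittLift.exists_witt_limit p R
    (fun n => (WittLift.idemSeq p R E0 hE0 n).1)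
    (fun n => WittLift.idemSeq_compat p R E0 hE0 n)
  -- the lifted matrix is idempotent
  have hWidem : IsIdempotentElem Wm := by
    show Wm * Wm = Wm
    rw [← sub_eq_zero]
    refine Matrix.ext fun a b => ?_
    have hz : ∀ n, WittLift.tau p R n ((Wm * Wm - Wm) a b) = 0 := by
      intro n
      have hmm : (WittLift.tau p R n).mapMatrix (Wm * Wm - Wm) = 0 := by
        rw [map_sub, map_mul, hWm n,
          ((WittLift.idemSeq p R E0 hE0 n).2 :
            (WittLift.idemSeq p R E0 hE0 n).1 * (WittLift.idemSeq p R E0 hE0 n).1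
              = (WittLift.idemSeq p R E0 hE0 n).1), sub_self]
      have := congrArg (fun Mt => Mt a b) hmm
      simpa [RingHom.mapMatrix_apply] using this
    exact WittLift.eq_zero_of_tau_eq_zero p R _ hz
  -- the reduction of `Wm` and its comparison with `E`
  set w : WittVector p R →+* R := algebraMap (WittVector p R) R with hw
  set E'' : Matrix (Fin k) (Fin k) R := Wm.map w with hE''def
  have hE''idem : IsIdempotentElem E'' := by
    show E'' * E'' = E''
    rw [hE''def, ← Matrix.map_mul, hWidem]
  have hcong : ∀ a b, E'' a b - E a b ∈ Ideal.span {(p : R)} := by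
    intro a b
    have h1 := congrArg (fun Mt => WittLift.w1equiv (p := p) (Mt a b)) (hWm 0)
    simp only [RingHom.mapMatrix_apply, Matrix.map_apply] at h1
    rw [WittLift.w1equiv_apply, WittLift.coeff_tau] at h1
    have h2 : WittLift.w1equiv (p := p) (E0 a b) = q1 (E a b) := by
      have : E0 a b = (WittLift.w1equiv (p := p) (B := WittLift.Rq p R 0)).symm (q1 (E a b)) :=
        rfl
      rw [this, RingEquiv.apply_symm_apply]
    rw [show (↑(WittLift.idemSeq p R E0 hE0 0) : Matrix (Fin k) (Fin k) (WittLift.Qn p R 0))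
      = E0 from rfl, h2] at h1
    have h3 : q1 (E'' a b - E a b) = 0 := by
      rw [map_sub]
      have hE''ab : E'' a b = (Wm a b).coeff 0 := by
        rw [hE''def]
        exact halg (Wm a b)
      rw [hE''ab, ← h1]
      exact sub_self _
    have h4 := (Ideal.Quotient.eq_zero_iff_mem).1 h3
    have h5 : (Ideal.span {(p : R) ^ (0 + 1)} : Ideal R) = Ideal.span {(p : R)} := by
      norm_num
    rwa [h5] at h4
  -- the conjugating unit
  set u : Matrix (Fin k) (Fin k) R := E'' * E + (1 - E'') * (1 - E) with hu
  set qp : R →+* R ⧸ Ideal.span {(p : R)} := Ideal.Quotient.mk _ with hqp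
  have hqEE : qp.mapMatrix E'' = qp.mapMatrix E := by
    refine Matrix.ext fun a b => ?_
    simp only [RingHom.mapMatrix_apply, Matrix.map_apply]
    exact (Ideal.Quotient.mk_eq_mk_iff_sub_mem _ _).2 (hcong a b)
  have hqu : qp.mapMatrix u = 1 := by
    have hF : IsIdempotentElem (qp.mapMatrix E) := by
      show _ * _ = _
      rw [← map_mul, hEidem]
    rw [hu]
    simp only [map_add, map_mul, map_sub, map_one, hqEE]
    set F := qp.mapMatrix E with hF2
    have hexp : (1 - F) * (1 - F) = 1 - F - F + F * F := by noncomm_ring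
    rw [hexp, (hF : F * F = F)]
    abel
  have hdet : IsUnit u := by
    apply (Matrix.isUnit_iff_isUnit_det u).2
    have h1 : qp u.det = 1 := by rw [RingHom.map_det, hqu, Matrix.det_one]
    have hmem : u.det - 1 ∈ Ideal.span {(p : R)} := by
      refine (Ideal.Quotient.mk_eq_mk_iff_sub_mem _ _).1 ?_
      rw [← hqp]  -- align
      rw [h1, map_one]
    have hj : u.det - 1 ∈ (⊥ : Ideal R).jacobson := IsAdicComplete.le_jacobson_bot (I := Ideal.span {(p : R)}) hmem
    have h2 := Ideal.mem_jacobson_bot.1 hj 1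
    have h3 : (u.det - 1) * 1 + 1 = u.det := by ring
    rwa [h3] at h2
  have huE : u * E = E'' * u := by
    have hA : (1 - E) * E = 0 := by
      rw [sub_mul, one_mul, (hEidem : E * E = E)]
      exact sub_self E
    have hB : E'' * (1 - E'') = 0 := by
      rw [mul_sub, mul_one, (hE''idem : E'' * E'' = E'')]
      exact sub_self E''
    have h1 : u * E = E'' * E := by
      rw [hu, add_mul, mul_assoc (1 - E'') (1 - E) E, hA, mul_zero, add_zero,
        mul_assoc, (hEidem : E * E = E)]
    have h2 : E'' * u = E'' * E := by
      rw [hu, mul_add, ← mul_assoc E'' (1 - E'') (1 - E), hB, zero_mul, add_zero,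
        ← mul_assoc, (hE''idem : E'' * E'' = E'')]
    rw [h1, h2]
  -- linear algebra over `R`
  obtain ⟨uu, huu⟩ := hdet
  set h'' : (Fin k → R) →ₗ[R] (Fin k → R) := Matrix.toLin' E'' with hh''
  have hUcomp1 : Matrix.toLin' u ∘ₗ Matrix.toLin' ((↑uu⁻¹ : Matrix (Fin k) (Fin k) R))
      = LinearMap.id := by
    rw [← Matrix.toLin'_mul, ← huu, Units.mul_inv, Matrix.toLin'_one]
  have hUcomp2 : Matrix.toLin' ((↑uu⁻¹ : Matrix (Fin k) (Fin k) R)) ∘ₗ Matrix.toLin' u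
      = LinearMap.id := by
    rw [← Matrix.toLin'_mul, ← huu, Units.inv_mul, Matrix.toLin'_one]
  set U : (Fin k → R) ≃ₗ[R] (Fin k → R) :=
    LinearEquiv.ofLinear (Matrix.toLin' u) (Matrix.toLin' (↑uu⁻¹ : Matrix (Fin k) (Fin k) R))
      hUcomp1 hUcomp2 with hU
  have hUcoe : (U : (Fin k → R) →ₗ[R] (Fin k → R)) = Matrix.toLin' u := rfl
  have hUh₀ : (U : (Fin k → R) →ₗ[R] (Fin k → R)) ∘ₗ h₀
      = h'' ∘ₗ (U : (Fin k → R) →ₗ[R] (Fin k → R)) := by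
    rw [hUcoe, ← hEh₀, hh'', ← Matrix.toLin'_mul, ← Matrix.toLin'_mul, huE]
  have hmapU : Submodule.map (U : (Fin k → R) →ₗ[R] (Fin k → R)) (LinearMap.range h₀)
      = LinearMap.range h'' := by
    rw [← LinearMap.range_comp, hUh₀, LinearMap.range_comp, LinearEquiv.range,
      Submodule.map_top]
  set e3 : (LinearMap.range h₀) ≃ₗ[R] (LinearMap.range h'') :=
    LinearEquiv.ofSubmodules U _ _ hmapU with he3
  -- `range h₀ ≃ M`
  set e4 : (LinearMap.range h₀) ≃ₗ[R] M :=
    LinearEquiv.ofLinear (πM ∘ₗ (LinearMap.range h₀).subtype)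
      (LinearMap.codRestrict _ sM (fun m => ⟨sM m, by
        show sM (πM (sM m)) = sM m
        rw [hps]⟩))
      (LinearMap.ext fun m => by
        show πM (sM m) = m
        exact hps m)
      (LinearMap.ext fun x => by
        apply Subtype.ext
        show sM (πM (x : Fin k → R)) = (x : Fin k → R)
        obtain ⟨y, hy⟩ := x.2
        rw [← hy]
        exact LinearMap.congr_fun h₀idem y) with he4
  -- the module over the Witt vectors
  set gW : (Fin k → WittVector p R) →ₗ[WittVector p R] (Fin k → WittVector p R) :=
    Matrix.toLin' Wm with hgW
  have hMf : Module.Finite (WittVector p R) ↥(LinearMap.range gW) := inferInstance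
  have hMp : Module.Projective (WittVector p R) ↥(LinearMap.range gW) := by
    refine Module.Projective.of_split (LinearMap.range gW).subtype
      (LinearMap.codRestrict _ gW (fun x => LinearMap.mem_range_self _ x)) ?_
    refine LinearMap.ext fun x => ?_
    apply Subtype.ext
    show gW (x : Fin k → WittVector p R) = (x : Fin k → WittVector p R)
    obtain ⟨y, hy⟩ := x.2
    rw [← hy]
    exact LinearMap.congr_fun (WittLift.toLin'_idem Wm hWidem) y
  obtain ⟨e2⟩ := WittLift.baseChange_range_idem R Wm hWidem
  refine ⟨ModuleCat.of (WittVector p R) ↥(LinearMap.range gW), hMf, hMp, ?_⟩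
  exact ⟨e2.trans (e3.symm.trans e4)⟩
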